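/- Let r be a natural number, s : {1,…,r} → ℂ, and define F(w) := Σ_{m : {1,…,r} → ℕ} ( ∏_{j=1}^{r} s_j^{m_j} / m_j! ) · Γ( w − Σ_{j=1}^{r} j·m_j ) for every complex w that is not an integer (the sum converges absolutely). Then for every complex z that is not an integer, F(z + 1) + Σ_{j=1}^{r} j·s_j·F(z − j) = z · F(z). -/

import Mathlib

open Complex Function

lemma gamma_bound (z : ℂ) (hz : ∀ m : ℤ, z ≠ (m : ℂ)) :
    ∃ C : ℝ, ∀ n : ℕ, ((n : ℝ) + 1) * ‖Complex.Gamma (z - n)‖ ≤ C := by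
  have hzn : ∀ n : ℕ, z - (n : ℂ) ≠ 0 := by
    intro n h
    rw [sub_eq_zero] at h
    exact hz n (by push_cast; exact h)
  set g : ℕ → ℝ := fun n => ((n : ℝ) + 1) * ‖Complex.Gamma (z - n)‖ with hg
  have step : ∀ n : ℕ, ‖z‖ + 2 ≤ n → g (n + 1) ≤ g n := by
    intro n hn
    have h1 : z - (n : ℂ) = (z - ((n + 1 : ℕ) : ℂ)) + 1 := by push_cast; ring
    have hnorm : ‖Complex.Gamma (z - n)‖
        = ‖z - ((n + 1 : ℕ) : ℂ)‖ * ‖Complex.Gamma (z - ((n + 1 : ℕ) : ℂ))‖ := by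
      rw [h1, Complex.Gamma_add_one _ (hzn (n + 1)), norm_mul]
    have hcast : ‖(((n + 1 : ℕ)) : ℂ)‖ = (n : ℝ) + 1 := by
      rw [Complex.norm_natCast]; push_cast; ring
    have hlow : (3 : ℝ) ≤ ‖z - ((n + 1 : ℕ) : ℂ)‖ := by
      have h := norm_sub_norm_le (((n + 1 : ℕ) : ℂ)) z
      rw [hcast, norm_sub_rev] at h
      linarith
    have hGnn : (0 : ℝ) ≤ ‖Complex.Gamma (z - ((n + 1 : ℕ) : ℂ))‖ := norm_nonneg _
    have hn0 : (0 : ℝ) ≤ (n : ℝ) := Nat.cast_nonneg n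
    simp only [hg]
    rw [hnorm]
    push_cast
    push_cast at hlow hGnn
    nlinarith [mul_le_mul_of_nonneg_right
      (show ((n : ℝ) + 1 + 1 : ℝ) ≤ ((n : ℝ) + 1) * ‖z - ((n : ℂ) + 1)‖ by nlinarith) hGnn]
  set K : ℕ := ⌈‖z‖⌉₊ + 2 with hK
  have hKz : ‖z‖ + 2 ≤ (K : ℝ) := by
    have := Nat.le_ceil ‖z‖
    push_cast [hK]
    linarith
  have hne : (Finset.range (K + 1)).Nonempty := ⟨0, by simp⟩
  refine ⟨(Finset.range (K + 1)).sup' hne g, fun n => ?_⟩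
  have : ∀ n : ℕ, g n ≤ (Finset.range (K + 1)).sup' hne g := by
    intro n
    induction n with
    | zero => exact Finset.le_sup' g (by simp)
    | succ m ih =>
      by_cases hm : m + 1 ≤ K
      · exact Finset.le_sup' g (Finset.mem_range.mpr (by omega))
      · have hmK : K ≤ m := by omega
        have : ‖z‖ + 2 ≤ (m : ℝ) := le_trans hKz (by exact_mod_cast Nat.cast_le.mpr hmK)
        exact le_trans (step m this) ih
  exact this n


lemma pi_summable : ∀ (n : ℕ) (t : Fin n → ℕ → ℝ), (∀ j k, 0 ≤ t j k) → (∀ j, Summable (t j)) →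
    Summable (fun m : Fin n → ℕ => ∏ j, t j (m j)) := by
  intro n
  induction n with
  | zero =>
    intro t _ _
    haveI : Subsingleton (Fin 0 → ℕ) := ⟨fun a b => funext fun i => i.elim0⟩
    haveI : Finite (Fin 0 → ℕ) := Finite.of_subsingleton
    exact Summable.of_finite
  | succ n ih =>
    intro t ht hs
    have key : Summable (fun p : ℕ × (Fin n → ℕ) => t 0 p.1 * ∏ j : Fin n, t j.succ (p.2 j)) := by
      apply Summable.mul_of_nonneg (hs 0)
        (ih (fun j => t j.succ) (fun j k => ht _ _) (fun j => hs _))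
      · exact fun k => ht 0 k
      · exact fun m => Finset.prod_nonneg fun j _ => ht _ _
    have h2 : Summable ((fun m : Fin (n + 1) → ℕ => ∏ j, t j (m j)) ∘ (Fin.consEquiv fun _ => ℕ)) := by
      apply key.congr
      intro p
      simp only [Function.comp_apply, Fin.consEquiv_apply, Fin.prod_univ_succ,
        Fin.cons_zero, Fin.cons_succ]
    exact (Fin.consEquiv fun _ => ℕ).summable_iff.mp h2

/-- Quantum spectral curve of the stationary GW theory of P¹ relative to one point:
for `F(w) = Σ_m (∏_j s_j^{m_j}/m_j!) Γ(w − Σ_j j·m_j)` one has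
`F(z+1) + Σ_{j=1}^r j·s_j·F(z−j) = z·F(z)`. -/
theorem stmt14 (r : ℕ) (s : Fin r → ℂ)
    (F : ℂ → ℂ)
    (hF : ∀ w : ℂ, (∀ m : ℤ, w ≠ (m : ℂ)) →
      F w = ∑' m : Fin r → ℕ,
        (∏ j, s j ^ m j / ((m j).factorial : ℂ)) *
          Complex.Gamma (w - ((∑ j, (j.val + 1) * m j : ℕ) : ℂ)))
    (z : ℂ) (hz : ∀ m : ℤ, z ≠ (m : ℂ)) :
    F (z + 1) + (∑ j : Fin r, ((j.val + 1 : ℕ) : ℂ) * s j * F (z - ((j.val + 1 : ℕ) : ℂ)))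
      = z * F z := by
  classical
  set c : (Fin r → ℕ) → ℂ := fun m => ∏ j, s j ^ m j / ((m j).factorial : ℂ) with hc
  set N : (Fin r → ℕ) → ℕ := fun m => ∑ j, (j.val + 1) * m j with hN
  -- basic non-integrality facts
  have hz1 : ∀ m : ℤ, z + 1 ≠ (m : ℂ) := fun m h => hz (m - 1) (by push_cast; linear_combination h)
  have hzsub : ∀ (k : ℕ), ∀ m : ℤ, z - (k : ℂ) ≠ (m : ℂ) :=
    fun k m h => hz (m + k) (by push_cast; linear_combination h)
  have hzn : ∀ n : ℕ, z - (n : ℂ) ≠ 0 := fun n h => hz n (by push_cast; linear_combination h)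
  -- norms
  have hcnorm : ∀ m : Fin r → ℕ, ‖c m‖ = ∏ j, ‖s j‖ ^ m j / ((m j).factorial : ℝ) := by
    intro m
    rw [hc]
    rw [norm_prod]
    refine Finset.prod_congr rfl fun j _ => ?_
    rw [norm_div, norm_pow, Complex.norm_natCast]
  obtain ⟨C, hC⟩ := gamma_bound z hz
  have hMsum : Summable (fun m : Fin r → ℕ => C * ∏ j, ‖s j‖ ^ m j / ((m j).factorial : ℝ)) :=
    (pi_summable r (fun j k => ‖s j‖ ^ k / (k.factorial : ℝ))
      (fun j k => div_nonneg (pow_nonneg (norm_nonneg _) _) (by positivity))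
      (fun j => Real.summable_pow_div_factorial _)).mul_left C
  have hmaster : Summable (fun m : Fin r → ℕ =>
      ((N m : ℝ) + 1) * ‖c m * Complex.Gamma (z - (N m : ℕ))‖) := by
    refine Summable.of_nonneg_of_le (fun m => by positivity) (fun m => ?_) hMsum
    rw [norm_mul, hcnorm m]
    have hp : (0 : ℝ) ≤ ∏ j, ‖s j‖ ^ m j / ((m j).factorial : ℝ) :=
      Finset.prod_nonneg fun j _ => div_nonneg (pow_nonneg (norm_nonneg _) _) (by positivity)
    calc ((N m : ℝ) + 1) * ((∏ j, ‖s j‖ ^ m j / ((m j).factorial : ℝ)) * ‖Complex.Gamma (z - (N m : ℕ))‖)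
        = (∏ j, ‖s j‖ ^ m j / ((m j).factorial : ℝ)) * (((N m : ℝ) + 1) * ‖Complex.Gamma (z - (N m : ℕ))‖) := by ring
      _ ≤ (∏ j, ‖s j‖ ^ m j / ((m j).factorial : ℝ)) * C := mul_le_mul_of_nonneg_left (hC (N m)) hp
      _ = C * ∏ j, ‖s j‖ ^ m j / ((m j).factorial : ℝ) := mul_comm _ _
  have hsummable_of_coeff : ∀ (a : (Fin r → ℕ) → ℕ), (∀ m, a m ≤ N m + 1) →
      Summable (fun m : Fin r → ℕ => ((a m : ℕ) : ℂ) * (c m * Complex.Gamma (z - (N m : ℕ)))) := by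
    intro a ha
    refine Summable.of_norm (Summable.of_nonneg_of_le (fun m => norm_nonneg _) (fun m => ?_) hmaster)
    rw [norm_mul, Complex.norm_natCast]
    have h1 : (a m : ℝ) ≤ (N m : ℝ) + 1 := by exact_mod_cast ha m
    exact mul_le_mul_of_nonneg_right h1 (norm_nonneg _) |>.trans_eq rfl
  have hf : Summable (fun m : Fin r → ℕ => c m * Complex.Gamma (z - (N m : ℕ))) := by
    have := hsummable_of_coeff (fun _ => 1) (fun m => Nat.le_add_left 1 (N m))
    simpa using this
  have hd : Summable (fun m : Fin r → ℕ => ((N m : ℕ) : ℂ) * (c m * Complex.Gamma (z - (N m : ℕ)))) :=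
    hsummable_of_coeff N (fun m => Nat.le_succ _)
  have hh : ∀ j : Fin r, Summable (fun m : Fin r → ℕ =>
      (((j.val + 1) * m j : ℕ) : ℂ) * (c m * Complex.Gamma (z - (N m : ℕ)))) := by
    intro j
    refine hsummable_of_coeff (fun m => (j.val + 1) * m j) (fun m => ?_)
    have : (j.val + 1) * m j ≤ N m :=
      Finset.single_le_sum (f := fun i => (i.val + 1) * m i) (fun i _ => Nat.zero_le _) (Finset.mem_univ j)
    exact this.trans (Nat.le_succ _)
  -- Step 1 : F (z+1)
  have e1 : F (z + 1) = z * (∑' m, c m * Complex.Gamma (z - (N m : ℕ)))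
      - ∑' m, ((N m : ℕ) : ℂ) * (c m * Complex.Gamma (z - (N m : ℕ))) := by
    rw [hF (z + 1) hz1]
    have h0 : (∑' m : Fin r → ℕ, (∏ j, s j ^ m j / ((m j).factorial : ℂ)) *
          Complex.Gamma (z + 1 - ((∑ j, (j.val + 1) * m j : ℕ) : ℂ)))
        = ∑' m, (z * (c m * Complex.Gamma (z - (N m : ℕ)))
            - ((N m : ℕ) : ℂ) * (c m * Complex.Gamma (z - (N m : ℕ)))) := by
      refine tsum_congr fun m => ?_
      have hG : Complex.Gamma (z + 1 - ((N m : ℕ) : ℂ))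
          = (z - (N m : ℕ)) * Complex.Gamma (z - (N m : ℕ)) := by
        rw [show z + 1 - ((N m : ℕ) : ℂ) = (z - (N m : ℕ)) + 1 by ring,
          Complex.Gamma_add_one _ (hzn (N m))]
      show c m * Complex.Gamma (z + 1 - ((N m : ℕ) : ℂ)) = _
      rw [hG]; ring
    rw [h0, Summable.tsum_sub (hf.mul_left z) hd, tsum_mul_left]
  -- Step 2 : z * F z
  have e2 : z * F z = z * ∑' m, c m * Complex.Gamma (z - (N m : ℕ)) := by
    rw [hF z hz]
  -- Step 3 : the shifted terms
  have e3 : ∀ j : Fin r, ((j.val + 1 : ℕ) : ℂ) * s j * F (z - ((j.val + 1 : ℕ) : ℂ))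
      = ∑' m, (((j.val + 1) * m j : ℕ) : ℂ) * (c m * Complex.Gamma (z - (N m : ℕ))) := by
    intro j
    rw [hF _ (hzsub (j.val + 1)), ← tsum_mul_left]
    set ι : (Fin r → ℕ) → (Fin r → ℕ) := fun m => Function.update m j (m j + 1) with hι
    have hιj : ∀ m : Fin r → ℕ, ι m j = m j + 1 := fun m => Function.update_self j _ m
    have hιne : ∀ (m : Fin r → ℕ) (i : Fin r), i ≠ j → ι m i = m i :=
      fun m i hij => Function.update_of_ne hij _ m
    have hinj : Function.Injective ι := by
      intro a b hab
      funext i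
      rcases eq_or_ne i j with rfl | hij
      · have := congrFun hab i
        rw [hιj, hιj] at this
        omega
      · have := congrFun hab i
        rwa [hιne a i hij, hιne b i hij] at this
    have hNι : ∀ m : Fin r → ℕ, N (ι m) = N m + (j.val + 1) := by
      intro m
      rw [hN]
      have h1 : ∀ i : Fin r, (i.val + 1) * ι m i
          = (i.val + 1) * m i + (if i = j then j.val + 1 else 0) := by
        intro i
        rcases eq_or_ne i j with rfl | hij
        · rw [hιj]; simp; ring
        · rw [hιne m i hij]; simp [hij]
      calc (∑ i, (i.val + 1) * ι m i)
          = ∑ i, ((i.val + 1) * m i + if i = j then j.val + 1 else 0) :=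
            Finset.sum_congr rfl fun i _ => h1 i
        _ = (∑ i, (i.val + 1) * m i) + ∑ i, (if i = j then j.val + 1 else 0) :=
            Finset.sum_add_distrib
        _ = N m + (j.val + 1) := by rw [hN]; simp
    have hcι : ∀ m : Fin r → ℕ, ((m j : ℂ) + 1) * c (ι m) = s j * c m := by
      intro m
      have hfac : ((m j).factorial : ℂ) ≠ 0 := Nat.cast_ne_zero.mpr (Nat.factorial_ne_zero _)
      have hsucc : ((m j : ℂ) + 1) ≠ 0 := by
        have : ((m j + 1 : ℕ) : ℂ) ≠ 0 := Nat.cast_ne_zero.mpr (Nat.succ_ne_zero _)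
        push_cast at this; exact this
      have h1 : c (ι m) = (s j ^ (m j + 1) / ((m j + 1).factorial : ℂ))
          * ∏ i ∈ Finset.univ.erase j, s i ^ m i / ((m i).factorial : ℂ) := by
        simp only [hc]
        rw [← Finset.mul_prod_erase _ _ (Finset.mem_univ j), hιj]
        congr 1
        exact Finset.prod_congr rfl fun i hi => by
          rw [hιne m i (Finset.ne_of_mem_erase hi)]
      have h2 : c m = (s j ^ m j / ((m j).factorial : ℂ))
          * ∏ i ∈ Finset.univ.erase j, s i ^ m i / ((m i).factorial : ℂ) := by
        simp only [hc]
        rw [← Finset.mul_prod_erase _ _ (Finset.mem_univ j)]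
      have key : ((m j : ℂ) + 1) * (s j ^ (m j + 1) / ((m j + 1).factorial : ℂ))
          = s j * (s j ^ m j / ((m j).factorial : ℂ)) := by
        have hfs : ((m j + 1).factorial : ℂ) = ((m j : ℂ) + 1) * ((m j).factorial : ℂ) := by
          rw [Nat.factorial_succ]; push_cast; ring
        rw [pow_succ, hfs]
        field_simp
      rw [h1, h2, ← mul_assoc, key, mul_assoc]
    have hsupp : Function.support (fun m : Fin r → ℕ =>
        (((j.val + 1) * m j : ℕ) : ℂ) * (c m * Complex.Gamma (z - (N m : ℕ)))) ⊆ Set.range ι := by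
      intro m hm
      by_contra hr
      apply hm
      have hmj : m j = 0 := by
        by_contra h0
        apply hr
        obtain ⟨k, hk⟩ := Nat.exists_eq_succ_of_ne_zero h0
        refine ⟨Function.update m j k, ?_⟩
        funext i
        rcases eq_or_ne i j with rfl | hij
        · rw [hιj, Function.update_self, hk]
        · rw [hιne _ i hij, Function.update_of_ne hij]
      simp [hmj]
    have hre := Function.Injective.tsum_eq hinj hsupp
    rw [← hre]
    refine tsum_congr fun m => ?_
    show ((j.val + 1 : ℕ) : ℂ) * s j * (c m * Complex.Gamma (z - ((j.val + 1 : ℕ) : ℂ) - ((∑ i, (i.val + 1) * m i : ℕ) : ℂ))) = _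
    have harg : z - ((j.val + 1 : ℕ) : ℂ) - ((∑ i, (i.val + 1) * m i : ℕ) : ℂ)
        = z - ((N (ι m) : ℕ) : ℂ) := by
      rw [hNι, hN]
      push_cast
      ring
    rw [harg]
    have hcast : (((j.val + 1) * ι m j : ℕ) : ℂ) = ((j.val + 1 : ℕ) : ℂ) * ((m j : ℂ) + 1) := by
      rw [hιj]; push_cast; ring
    rw [hcast]
    calc ((j.val + 1 : ℕ) : ℂ) * s j * (c m * Complex.Gamma (z - ((N (ι m) : ℕ) : ℂ)))
        = ((j.val + 1 : ℕ) : ℂ) * ((s j * c m) * Complex.Gamma (z - ((N (ι m) : ℕ) : ℂ))) := by ring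
      _ = ((j.val + 1 : ℕ) : ℂ) * ((((m j : ℂ) + 1) * c (ι m)) * Complex.Gamma (z - ((N (ι m) : ℕ) : ℂ))) := by rw [hcι]
      _ = ((j.val + 1 : ℕ) : ℂ) * ((m j : ℂ) + 1) * (c (ι m) * Complex.Gamma (z - ((N (ι m) : ℕ) : ℂ))) := by ring
  -- put everything together
  rw [e1, e2, Finset.sum_congr rfl fun j _ => e3 j]
  rw [← Summable.tsum_finsetSum fun j _ => hh j]
  have hfinal : (∑' m, ∑ j : Fin r, (((j.val + 1) * m j : ℕ) : ℂ) * (c m * Complex.Gamma (z - (N m : ℕ))))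
      = ∑' m, ((N m : ℕ) : ℂ) * (c m * Complex.Gamma (z - (N m : ℕ))) := by
    refine tsum_congr fun m => ?_
    rw [← Finset.sum_mul]
    congr 1
    rw [hN]
    push_cast
    ring
  rw [hfinal]
  ring
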